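/- Let H be an N×m real matrix with full row rank satisfying spark(H) = N+1, let s⋄ ∈ R^m with ‖s⋄‖₀ = r⋄, y = Hs⋄, and suppose N ≥ max{2r⋄, r⋄+3} and y ≠ 0. Define σ̂²(r) = min over r-sparse s of (y - Hs)^T(HH^T)^{-1}(y - Hs)/N. Then σ̂²(r⋄) = 0, σ̂²(r) > 0 for every r < r⋄, and the r-sparse minimizer at r = r⋄ is unique and equals s⋄. -/

import Mathlib

open Matrix Set

/-- Number of nonzero entries (ℓ₀ "norm"). -/
noncomputable def l0 {m : ℕ} (s : Fin m → ℝ) : ℕ := {j | s j ≠ 0}.ncard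

/-- The weighted squared error E(s) = (y - Hs)ᵀ (HHᵀ)⁻¹ (y - Hs). -/
noncomputable def Efun {N m : ℕ} (H : Matrix (Fin N) (Fin m) ℝ) (y : Fin N → ℝ)
    (s : Fin m → ℝ) : ℝ :=
  (y - H *ᵥ s) ⬝ᵥ ((H * Hᵀ)⁻¹ *ᵥ (y - H *ᵥ s))

/-- The concentrated (profile) ML variance estimate σ̂²(r) at sparsity level r. -/
noncomputable def sigmaML {N m : ℕ} (H : Matrix (Fin N) (Fin m) ℝ) (y : Fin N → ℝ)
    (r : ℕ) : ℝ :=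
  sInf {x | ∃ t : Fin m → ℝ, l0 t ≤ r ∧ x = Efun H y t / N}

section AuxLemmas

variable {N m : ℕ}

/-- Any at most `N` columns of `H` are linearly independent. -/
lemma li_small (H : Matrix (Fin N) (Fin m) ℝ) (hNm : N ≤ m)
    (hURP : ∀ A : Finset (Fin m), A.card = N →
      LinearIndependent ℝ (fun j : A => fun i => H i (j : Fin m)))
    (A : Finset (Fin m)) (hA : A.card ≤ N) :
    LinearIndependent ℝ (fun j : A => fun i => H i (j : Fin m)) := by
  obtain ⟨B, hAB, -, hB⟩ := Finset.exists_subsuperset_card_eq (A.subset_univ) hA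
    (by simpa using hNm)
  have hli := hURP B hB
  have heq : (fun j : A => fun i => H i (j : Fin m)) =
      (fun j : B => fun i => H i (j : Fin m)) ∘ (fun j : A => (⟨j, hAB j.2⟩ : B)) := rfl
  rw [heq]
  exact hli.comp _ (fun a b hab =>
    Subtype.ext (congrArg (fun z : B => (z : Fin m)) hab))

/-- A vector in the kernel of `H` with at most `N` nonzero entries is zero. -/
lemma ker_sparse (H : Matrix (Fin N) (Fin m) ℝ) (hNm : N ≤ m)
    (hURP : ∀ A : Finset (Fin m), A.card = N →
      LinearIndependent ℝ (fun j : A => fun i => H i (j : Fin m)))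
    (d : Fin m → ℝ) (hd : H *ᵥ d = 0) (hcard : l0 d ≤ N) : d = 0 := by
  classical
  set A : Finset (Fin m) := Finset.univ.filter (fun j => d j ≠ 0) with hA
  have hl0A : l0 d = A.card := by
    rw [l0, Set.ncard_eq_toFinset_card']
    congr 1
    ext j
    simp [hA]
  have hcardA : A.card ≤ N := hl0A ▸ hcard
  have hli := li_small H hNm hURP A hcardA
  rw [Fintype.linearIndependent_iff] at hli
  have key : ∀ j : A, d (j : Fin m) = 0 := by
    apply hli (fun j : A => d (j : Fin m))
    funext i
    have h1 : ∑ j : A, d (j : Fin m) * H i (j : Fin m) = ∑ j ∈ A, d j * H i j :=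
      Finset.sum_coe_sort A (fun j => d j * H i j)
    have h2 : ∑ j ∈ A, d j * H i j = ∑ j, d j * H i j := by
      apply Finset.sum_subset A.subset_univ
      intro j _ hj
      simp only [hA, Finset.mem_filter, Finset.mem_univ, true_and, not_not] at hj
      simp [hj]
    have h3 : ∑ j, d j * H i j = (H *ᵥ d) i := by
      simp [Matrix.mulVec, dotProduct, mul_comm]
    have : (∑ j : A, d (j : Fin m) • fun i => H i (j : Fin m)) i
        = ∑ j : A, d (j : Fin m) * H i (j : Fin m) := by
      simp [Finset.sum_apply]
    rw [this, h1, h2, h3, hd]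
  funext j
  by_cases hj : j ∈ A
  · exact key ⟨j, hj⟩
  · simp only [hA, Finset.mem_filter, Finset.mem_univ, true_and, not_not] at hj
    exact hj

/-- Uniqueness of sufficiently sparse representations. -/
lemma sparse_unique (H : Matrix (Fin N) (Fin m) ℝ) (hNm : N ≤ m)
    (hURP : ∀ A : Finset (Fin m), A.card = N →
      LinearIndependent ℝ (fun j : A => fun i => H i (j : Fin m)))
    {t s : Fin m → ℝ} (h : H *ᵥ t = H *ᵥ s) (hc : l0 t + l0 s ≤ N) : t = s := by
  have hd : H *ᵥ (t - s) = 0 := by rw [Matrix.mulVec_sub, h, sub_self]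
  have hsub : {j | (t - s) j ≠ 0} ⊆ {j | t j ≠ 0} ∪ {j | s j ≠ 0} := by
    intro j hj
    by_contra hcon
    simp only [Set.mem_union, Set.mem_setOf_eq, not_or, not_not] at hcon
    apply hj
    simp [hcon.1, hcon.2]
  have hl : l0 (t - s) ≤ N := by
    refine le_trans (le_trans (Set.ncard_le_ncard hsub (Set.toFinite _))
      (Set.ncard_union_le _ _)) hc
  have := ker_sparse H hNm hURP (t - s) hd hl
  exact sub_eq_zero.mp this

/-- `H Hᵀ` is positive definite when `H` has full row rank. -/
lemma hht_posdef (H : Matrix (Fin N) (Fin m) ℝ) (hrank : H.rank = N) :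
    (H * Hᵀ).PosDef := by
  have hker : ∀ x : Fin N → ℝ, Hᵀ *ᵥ x = 0 → x = 0 := by
    have h1 : Hᵀ.rank = N := by rw [Matrix.rank_transpose, hrank]
    have hrn := Hᵀ.mulVecLin.finrank_range_add_finrank_ker
    rw [Matrix.rank] at h1
    rw [h1, Module.finrank_fin_fun] at hrn
    have hker0 : Module.finrank ℝ (LinearMap.ker Hᵀ.mulVecLin) = 0 := by omega
    have hkerbot : LinearMap.ker Hᵀ.mulVecLin = ⊥ :=
      Submodule.finrank_eq_zero.mp hker0
    intro x hx
    have hm : x ∈ LinearMap.ker Hᵀ.mulVecLin := by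
      show Hᵀ.mulVecLin x = 0
      rw [Matrix.mulVecLin_apply]
      exact hx
    rw [hkerbot] at hm
    simpa using hm
  refine Matrix.PosDef.of_dotProduct_mulVec_pos ?_ ?_
  · have := Matrix.isHermitian_mul_conjTranspose_self H
    simpa using this
  · intro x hx
    have hstar : star x = x := funext fun i => rfl
    have hv : Hᵀ *ᵥ x ≠ 0 := fun h => hx (hker x h)
    have hcalc : x ⬝ᵥ ((H * Hᵀ) *ᵥ x) = (Hᵀ *ᵥ x) ⬝ᵥ (Hᵀ *ᵥ x) := by
      rw [← Matrix.mulVec_mulVec, Matrix.dotProduct_mulVec, ← Matrix.mulVec_transpose]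
    rw [hstar, hcalc]
    have hnonneg : 0 ≤ (Hᵀ *ᵥ x) ⬝ᵥ (Hᵀ *ᵥ x) :=
      Finset.sum_nonneg fun i _ => mul_self_nonneg _
    have hne : (Hᵀ *ᵥ x) ⬝ᵥ (Hᵀ *ᵥ x) ≠ 0 :=
      fun h => hv (dotProduct_self_eq_zero.mp h)
    exact lt_of_le_of_ne hnonneg (Ne.symm hne)

/-- Uniform lower bound for a positive definite quadratic form. -/
lemma quad_lower {n : ℕ} (hn : 0 < n) {M : Matrix (Fin n) (Fin n) ℝ} (hM : M.PosDef) :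
    ∃ c > 0, ∀ x : Fin n → ℝ, c * ‖x‖ ^ 2 ≤ x ⬝ᵥ (M *ᵥ x) := by
  haveI : Nonempty (Fin n) := ⟨⟨0, hn⟩⟩
  have hpos : ∀ x : Fin n → ℝ, x ≠ 0 → 0 < x ⬝ᵥ (M *ᵥ x) := by
    intro x hx
    have := hM.dotProduct_mulVec_pos hx
    have hstar : star x = x := funext fun i => rfl
    rwa [hstar] at this
  have hcont : Continuous fun x : Fin n → ℝ => x ⬝ᵥ (M *ᵥ x) := by
    simp only [Matrix.mulVec, dotProduct]
    exact continuous_finset_sum _ fun i _ =>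
      (continuous_apply i).mul (continuous_finset_sum _ fun j _ =>
        (continuous_const.mul (continuous_apply j)))
  obtain ⟨u, hu, hmin⟩ := (isCompact_sphere (0 : Fin n → ℝ) 1).exists_isMinOn
    (NormedSpace.sphere_nonempty.mpr zero_le_one) hcont.continuousOn
  have hu1 : ‖u‖ = 1 := mem_sphere_zero_iff_norm.mp hu
  have hu0 : u ≠ 0 := by
    intro h
    rw [h] at hu1
    simp at hu1
  refine ⟨u ⬝ᵥ (M *ᵥ u), hpos u hu0, ?_⟩
  intro x
  rcases eq_or_ne x 0 with rfl | hx
  · simp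
  · have hxn : ‖x‖ ≠ 0 := norm_ne_zero_iff.mpr hx
    set v : Fin n → ℝ := ‖x‖⁻¹ • x with hv
    have hvs : v ∈ Metric.sphere (0 : Fin n → ℝ) 1 := by
      rw [mem_sphere_zero_iff_norm, hv, norm_smul, norm_inv, norm_norm,
        inv_mul_cancel₀ hxn]
    have hmv : u ⬝ᵥ (M *ᵥ u) ≤ v ⬝ᵥ (M *ᵥ v) := hmin hvs
    have hsc : v ⬝ᵥ (M *ᵥ v) = ‖x‖⁻¹ * ‖x‖⁻¹ * (x ⬝ᵥ (M *ᵥ x)) := by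
      rw [hv, Matrix.mulVec_smul, smul_dotProduct, dotProduct_smul]
      simp only [smul_eq_mul]
      ring
    have hkey : (‖x‖⁻¹ * ‖x‖⁻¹ * (x ⬝ᵥ (M *ᵥ x))) * ‖x‖ ^ 2 = x ⬝ᵥ (M *ᵥ x) := by
      rw [pow_two]
      field_simp
    calc (u ⬝ᵥ (M *ᵥ u)) * ‖x‖ ^ 2 ≤ (v ⬝ᵥ (M *ᵥ v)) * ‖x‖ ^ 2 :=
          mul_le_mul_of_nonneg_right hmv (sq_nonneg _)
      _ = x ⬝ᵥ (M *ᵥ x) := by rw [hsc, hkey]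

/-- The submodule of vectors supported in `A`. -/
def suppSub {m : ℕ} (A : Finset (Fin m)) : Submodule ℝ (Fin m → ℝ) where
  carrier := {t | ∀ j ∉ A, t j = 0}
  add_mem' := fun ha hb j hj => by simp [ha j hj, hb j hj]
  zero_mem' := fun j _ => rfl
  smul_mem' := fun c t ht j hj => by simp [ht j hj]

end AuxLemmas

theorem uss_sparsity_selection {N m : ℕ} (H : Matrix (Fin N) (Fin m) ℝ)
    (hNm : N ≤ m) (hrank : H.rank = N)
    (hURP : ∀ A : Finset (Fin m), A.card = N →
      LinearIndependent ℝ (fun j : A => fun i => H i (j : Fin m)))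
    (rd : ℕ) (sd : Fin m → ℝ) (hsd : l0 sd = rd)
    (y : Fin N → ℝ) (hy : y = H *ᵥ sd) (hy0 : y ≠ 0)
    (hN : max (2 * rd) (rd + 3) ≤ N) :
    sigmaML H y rd = 0 ∧
    (∀ r' : ℕ, r' < rd → 0 < sigmaML H y r') ∧
    (∀ t : Fin m → ℝ, l0 t ≤ rd → Efun H y t / N = sigmaML H y rd → t = sd) := by
  classical
  have h2rd : 2 * rd ≤ N := le_trans (le_max_left _ _) hN
  have hN3 : rd + 3 ≤ N := le_trans (le_max_right _ _) hN
  have hNpos : 0 < N := by omega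
  have hNR : (0 : ℝ) < (N : ℝ) := by exact_mod_cast hNpos
  have hM : (H * Hᵀ).PosDef := hht_posdef H hrank
  have hMinv : (H * Hᵀ)⁻¹.PosDef := hM.inv
  -- basic facts about Efun
  have hEnonneg : ∀ t : Fin m → ℝ, 0 ≤ Efun H y t := by
    intro t
    have := hMinv.posSemidef.dotProduct_mulVec_nonneg (y - H *ᵥ t)
    have hstar : star (y - H *ᵥ t) = y - H *ᵥ t := funext fun i => rfl
    rwa [hstar] at this
  have hEzero : ∀ t : Fin m → ℝ, Efun H y t = 0 → y = H *ᵥ t := by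
    intro t ht
    by_contra hne
    have hv : y - H *ᵥ t ≠ 0 := sub_ne_zero.mpr hne
    have := hMinv.dotProduct_mulVec_pos hv
    have hstar : star (y - H *ᵥ t) = y - H *ᵥ t := funext fun i => rfl
    rw [hstar] at this
    rw [Efun] at ht
    rw [ht] at this
    exact lt_irrefl 0 this
  have hEsd : Efun H y sd = 0 := by
    rw [Efun, hy, sub_self]
    simp
  -- Part 1
  have part1 : sigmaML H y rd = 0 := by
    have h0mem : (0 : ℝ) ∈ {x | ∃ t : Fin m → ℝ, l0 t ≤ rd ∧ x = Efun H y t / N} :=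
      ⟨sd, le_of_eq hsd, by rw [hEsd, zero_div]⟩
    have hlb : ∀ x ∈ {x | ∃ t : Fin m → ℝ, l0 t ≤ rd ∧ x = Efun H y t / N}, (0:ℝ) ≤ x := by
      rintro x ⟨t, -, rfl⟩
      exact div_nonneg (hEnonneg t) (le_of_lt hNR)
    exact le_antisymm (csInf_le ⟨0, hlb⟩ h0mem) (le_csInf ⟨0, h0mem⟩ hlb)
  -- Part 3
  have part3 : ∀ t : Fin m → ℝ, l0 t ≤ rd → Efun H y t / N = sigmaML H y rd → t = sd := by
    intro t hlt hEt
    rw [part1] at hEt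
    have hE0 : Efun H y t = 0 := by
      field_simp at hEt
      exact hEt.trans (mul_zero _)
    have hyt : y = H *ᵥ t := hEzero t hE0
    have : H *ᵥ t = H *ᵥ sd := by rw [← hyt, hy]
    exact sparse_unique H hNm hURP this (by omega)
  refine ⟨part1, ?_, part3⟩
  -- Part 2
  intro r' hr'
  obtain ⟨c, hc, hquad⟩ := quad_lower hNpos hMinv
  -- the set of images of r'-sparse vectors
  set K : Set (Fin N → ℝ) :=
    ⋃ A ∈ {A : Finset (Fin m) | A.card ≤ r'},
      ↑(Submodule.map H.mulVecLin (suppSub A)) with hK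
  have hKclosed : IsClosed K := by
    refine Set.Finite.isClosed_biUnion (Set.toFinite _) (fun A _ => ?_)
    exact Submodule.closed_of_finiteDimensional _
  have hKmem : ∀ t : Fin m → ℝ, l0 t ≤ r' → H *ᵥ t ∈ K := by
    intro t ht
    set A : Finset (Fin m) := Finset.univ.filter (fun j => t j ≠ 0) with hA
    have hl0A : l0 t = A.card := by
      rw [l0, Set.ncard_eq_toFinset_card']
      congr 1
      ext j
      simp [hA]
    have hAcard : A.card ≤ r' := hl0A ▸ ht
    refine Set.mem_biUnion (show A ∈ {A : Finset (Fin m) | A.card ≤ r'} from hAcard) ?_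
    refine ⟨t, ?_, by simp [Matrix.mulVecLin_apply]⟩
    intro j hj
    simp only [hA, Finset.mem_filter, Finset.mem_univ, true_and, not_not] at hj
    exact hj
  have hKne : K.Nonempty := ⟨0, by
    have := hKmem 0 (by simp [l0])
    simpa using this⟩
  have hyK : y ∉ K := by
    intro hyk
    rw [hK] at hyk
    simp only [Set.mem_iUnion] at hyk
    obtain ⟨A, hAcard, hmem⟩ := hyk
    obtain ⟨t, htA, hty⟩ := hmem
    have hl0t : l0 t ≤ A.card := by
      rw [l0]
      refine le_trans (Set.ncard_le_ncard ?_ A.finite_toSet) ?_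
      · intro j hj
        by_contra hjA
        exact hj (htA j hjA)
      · simp [Set.ncard_coe_finset]
    have hty' : H *ᵥ t = H *ᵥ sd := by
      rw [show H *ᵥ t = y from by rw [← hty]; simp [Matrix.mulVecLin_apply], hy]
    have hAr' : A.card ≤ r' := hAcard
    have := sparse_unique H hNm hURP hty' (by omega)
    rw [this] at hl0t
    omega
  have hdelta : 0 < Metric.infDist y K :=
    (hKclosed.notMem_iff_infDist_pos hKne).mp hyK
  set δ := Metric.infDist y K with hδ
  -- lower bound each element of the set
  have hlow : ∀ t : Fin m → ℝ, l0 t ≤ r' → c * δ ^ 2 ≤ Efun H y t := by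
    intro t ht
    have hdist : δ ≤ ‖y - H *ᵥ t‖ := by
      have := Metric.infDist_le_dist_of_mem (x := y) (hKmem t ht)
      rwa [dist_eq_norm] at this
    have h1 : c * δ ^ 2 ≤ c * ‖y - H *ᵥ t‖ ^ 2 := by
      apply mul_le_mul_of_nonneg_left _ (le_of_lt hc)
      exact pow_le_pow_left₀ (le_of_lt hdelta) hdist 2
    exact le_trans h1 (hquad (y - H *ᵥ t))
  have hset : ∀ x ∈ {x | ∃ t : Fin m → ℝ, l0 t ≤ r' ∧ x = Efun H y t / N},
      c * δ ^ 2 / N ≤ x := by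
    rintro x ⟨t, ht, rfl⟩
    gcongr
    exact hlow t ht
  have hne : {x | ∃ t : Fin m → ℝ, l0 t ≤ r' ∧ x = Efun H y t / N}.Nonempty :=
    ⟨Efun H y 0 / N, 0, by simp [l0], rfl⟩
  have hpos : 0 < c * δ ^ 2 / N :=
    div_pos (mul_pos hc (pow_pos hdelta 2)) hNR
  calc (0 : ℝ) < c * δ ^ 2 / N := hpos
    _ ≤ sigmaML H y r' := le_csInf hne hset
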